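/- Let $K$ be an ordered field equipped with a valuation $v$ whose valuation ring is convex. If $X \subseteq K$ is a convex set (with respect to the order) such that every open ball contained in $X$ has nonnegative valuative radius, then $X$ is contained in a single closed ball of radius $0$, i.e., there is $x_0$ with $X \subseteq \{x : v(x - x_0) \geq 0\}$. In particular, for all $x_1, x_2 \in X$, $v(x_1 - x_2) \geq 0$. -/

import Mathlib

/-- The open ball `B_{>γ}(a) = {x : v(x-a) > γ}` in a valued field. -/
def oball {K : Type*} [Field K] {Γ : Type*} [AddCommGroup Γ] [LinearOrder Γ] [IsOrderedAddMonoid Γ]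
    (v : AddValuation K (WithTop Γ)) (γ : Γ) (a : K) : Set K :=
  {x | (γ : WithTop Γ) < v (x - a)}

private lemma val_mono {K : Type*} [Field K] [LinearOrder K] [IsStrictOrderedRing K] {Γ : Type*}
    [AddCommGroup Γ] [LinearOrder Γ] [IsOrderedAddMonoid Γ] (v : AddValuation K (WithTop Γ))
    (hconv : ∀ a b x : K, (0 : WithTop Γ) ≤ v a → (0 : WithTop Γ) ≤ v b →
      a ≤ x → x ≤ b → (0 : WithTop Γ) ≤ v x)
    {u w : K} (hu : 0 < u) (huw : u ≤ w) : v w ≤ v u := by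
  have hw : 0 < w := lt_of_lt_of_le hu huw
  have h1 : (0 : WithTop Γ) ≤ v (u / w) := by
    refine hconv 0 1 (u / w) ?_ ?_ ?_ ?_
    · simp [v.map_zero]
    · simp [v.map_one]
    · positivity
    · exact (div_le_one hw).2 huw
  calc v w = 0 + v w := (zero_add _).symm
    _ ≤ v (u / w) + v w := add_le_add_left h1 _
    _ = v (u / w * w) := (v.map_mul _ _).symm
    _ = v u := by rw [div_mul_cancel₀ u hw.ne']

/-- Let `K` be an ordered field with a valuation whose valuation ring is convex.
If `X ⊆ K` is convex and every open ball contained in `X` has nonnegative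
radius, then `X` is contained in a single closed ball of radius `0`; in
particular all differences of elements of `X` have nonnegative valuation. -/
theorem convex_set_in_closed_zero_ball {K : Type*} [Field K] [LinearOrder K] [IsStrictOrderedRing K] {Γ : Type*}
    [AddCommGroup Γ] [LinearOrder Γ] [IsOrderedAddMonoid Γ] (v : AddValuation K (WithTop Γ))
    (hconv : ∀ a b x : K, (0 : WithTop Γ) ≤ v a → (0 : WithTop Γ) ≤ v b →
      a ≤ x → x ≤ b → (0 : WithTop Γ) ≤ v x)
    (X : Set K)
    (hX : ∀ a ∈ X, ∀ b ∈ X, ∀ x : K, a ≤ x → x ≤ b → x ∈ X)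
    (hballs : ∀ (γ : Γ) (a : K), oball v γ a ⊆ X → 0 ≤ γ) :
    (∃ x₀ : K, X ⊆ {x | (0 : WithTop Γ) ≤ v (x - x₀)}) ∧
    ∀ x₁ ∈ X, ∀ x₂ ∈ X, (0 : WithTop Γ) ≤ v (x₁ - x₂) := by
  have h2 : (0 : WithTop Γ) ≤ v 2 := by
    have := v.map_add 1 1
    rw [one_add_one_eq_two] at this
    simpa [v.map_one] using this
  have key : ∀ a ∈ X, ∀ b ∈ X, a ≤ b → (0 : WithTop Γ) ≤ v (b - a) := by
    intro a ha b hb hab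
    by_contra hneg
    push_neg at hneg
    have hne : b - a ≠ 0 := by
      intro h
      rw [h, v.map_zero] at hneg
      exact (not_lt.2 le_top) hneg
    have hab' : a < b := lt_of_le_of_ne hab fun h => hne (by rw [h, sub_self])
    have htop : v (b - a) ≠ ⊤ := v.ne_top_iff.2 hne
    obtain ⟨γ, hγ⟩ : ∃ γ : Γ, v (b - a) = (γ : WithTop Γ) := by
      cases h : v (b - a) with
      | top => exact absurd h htop
      | coe γ => exact ⟨γ, rfl⟩
    have hγneg : ¬ (0 ≤ γ) := by
      intro h
      apply (not_le.2 hneg)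
      rw [hγ]
      exact_mod_cast h
    set m := (a + b) / 2 with hm
    have hd : (0 : K) < (b - a) / 2 := by
      have := sub_pos.2 hab'
      positivity
    apply hγneg
    refine hballs γ m ?_
    intro x hx
    have hx' : (γ : WithTop Γ) < v (x - m) := hx
    -- show a ≤ x and x ≤ b
    have hfar : ∀ y : K, (b - a) / 2 ≤ y → ¬ ((γ : WithTop Γ) < v y) := by
      intro y hy hlt
      have hmono : v y ≤ v ((b - a) / 2) := val_mono v hconv hd hy
      have hcalc : v ((b - a) / 2) + v 2 = v (b - a) := by
        rw [← v.map_mul]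
        congr 1
        ring
      have h3 : v y + v 2 ≤ (γ : WithTop Γ) := by
        rw [← hγ, ← hcalc]
        exact add_le_add_left hmono _
      have h4 : (γ : WithTop Γ) < v y + v 2 := by
        calc (γ : WithTop Γ) < v y := hlt
          _ = v y + 0 := (add_zero _).symm
          _ ≤ v y + v 2 := add_le_add_right h2 _
      exact absurd h3 (not_le.2 h4)
    have hax : a ≤ x := by
      by_contra hax
      push_neg at hax
      refine hfar (m - x) ?_ ?_
      · have : (b - a) / 2 = m - a := by rw [hm]; ring
        rw [this]
        linarith
      · rwa [← v.map_sub_swap]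
    have hxb : x ≤ b := by
      by_contra hxb
      push_neg at hxb
      refine hfar (x - m) ?_ hx'
      have : (b - a) / 2 = b - m := by rw [hm]; ring
      rw [this]
      linarith
    exact hX a ha b hb x hax hxb
  have hall : ∀ x₁ ∈ X, ∀ x₂ ∈ X, (0 : WithTop Γ) ≤ v (x₁ - x₂) := by
    intro x₁ h₁ x₂ h₂
    rcases le_total x₂ x₁ with h | h
    · exact key x₂ h₂ x₁ h₁ h
    · rw [v.map_sub_swap]
      exact key x₁ h₁ x₂ h₂ h
  refine ⟨?_, hall⟩
  rcases X.eq_empty_or_nonempty with hE | ⟨x₀, hx₀⟩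
  · exact ⟨0, by rw [hE]; exact Set.empty_subset _⟩
  · exact ⟨x₀, fun x hx => hall x hx x₀ hx₀⟩
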